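/- Let a, b, c, d, e > 0, k ≥ 0, 0 < p < 1, 0 < m < 1, and let (u*, v*) with u* > 0, v* > 0 be a coexistence equilibrium, i.e., a/(1+k·v*) − b·u* − c·u*^(p−1)·v*^m = 0 and −d + e·u*^p·v*^(m−1) = 0. Write g₁ᵤ, g₁ᵥ for the partial derivatives of g₁(u,v) = a/(1+k·v) − b·u − c·u^(p−1)·v^m at (u*, v*) and g₂ᵤ, g₂ᵥ for those of g₂(u,v) = −d + e·u^p·v^(m−1) at (u*, v*). Assume b < c·(1−p)·u*^(p−2)·v*^m and that the predator nullcline slope is smaller than the prey nullcline slope at the equilibrium, i.e., −g₂ᵤ/g₂ᵥ < −g₁ᵤ/g₁ᵥ. Then det(J) < 0, where J = [[u*·g₁ᵤ, u*·g₁ᵥ],[v*·g₂ᵤ, v*·g₂ᵥ]], and the characteristic polynomial z² − trace(J)·z + det(J) has two real roots, one strictly positive and one strictly negative; i.e., the equilibrium is a saddle point. -/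

import Mathlib

private lemma quad_roots_of_neg (T D : ℝ) (hD : D < 0) :
    ∃ z₁ z₂ : ℝ, z₁ < 0 ∧ 0 < z₂ ∧
      ∀ z : ℝ, z ^ 2 - T * z + D = 0 ↔ (z = z₁ ∨ z = z₂) := by
  have hdisc : 0 < T ^ 2 - 4 * D := by nlinarith [sq_nonneg T]
  set s := Real.sqrt (T ^ 2 - 4 * D) with hs
  have hs2 : s ^ 2 = T ^ 2 - 4 * D := Real.sq_sqrt hdisc.le
  have hspos : 0 < s := Real.sqrt_pos.mpr hdisc
  have hsT : |T| < s := by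
    have h1 : T ^ 2 < s ^ 2 := by nlinarith
    nlinarith [abs_nonneg T, sq_abs T, hspos]
  have habs := abs_lt.mp hsT
  refine ⟨(T - s) / 2, (T + s) / 2, by linarith, by linarith, ?_⟩
  intro z
  have key : z ^ 2 - T * z + D = (z - (T - s) / 2) * (z - (T + s) / 2) := by
    nlinarith [hs2]
  rw [key]
  constructor
  · intro h
    rcases mul_eq_zero.mp h with h' | h'
    · exact Or.inl (by linarith)
    · exact Or.inr (by linarith)
  · rintro (h | h) <;> rw [h] <;> ring

/-- At a coexistence equilibrium `(u*, v*)` of the fear model with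
`b < c·(1-p)·u*^(p-2)·v*^m` and predator nullcline slope smaller than prey nullcline
slope, the Jacobian `J = [[u*·g₁ᵤ, u*·g₁ᵥ],[v*·g₂ᵤ, v*·g₂ᵥ]]` has `det J < 0`, and the
characteristic polynomial `z² - trace(J)·z + det(J)` has two real roots, one strictly
positive and one strictly negative: the equilibrium is a saddle. -/
theorem coexistence_saddle
    (a b c d e k p m ustar vstar : ℝ)
    (ha : 0 < a) (hb : 0 < b) (hc : 0 < c) (hd : 0 < d) (he : 0 < e) (hk : 0 ≤ k)
    (hp : 0 < p) (hp1 : p < 1) (hm : 0 < m) (hm1 : m < 1)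
    (hu : 0 < ustar) (hv : 0 < vstar)
    (heq1 : a / (1 + k * vstar) - b * ustar - c * ustar ^ (p - 1) * vstar ^ m = 0)
    (heq2 : -d + e * ustar ^ p * vstar ^ (m - 1) = 0)
    (g1u g1v g2u g2v : ℝ)
    (hg1u : g1u = deriv (fun w : ℝ =>
      a / (1 + k * vstar) - b * w - c * w ^ (p - 1) * vstar ^ m) ustar)
    (hg1v : g1v = deriv (fun w : ℝ =>
      a / (1 + k * w) - b * ustar - c * ustar ^ (p - 1) * w ^ m) vstar)
    (hg2u : g2u = deriv (fun w : ℝ => -d + e * w ^ p * vstar ^ (m - 1)) ustar)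
    (hg2v : g2v = deriv (fun w : ℝ => -d + e * ustar ^ p * w ^ (m - 1)) vstar)
    (hbc : b < c * (1 - p) * ustar ^ (p - 2) * vstar ^ m)
    (hslope : -g2u / g2v < -g1u / g1v)
    (J : Matrix (Fin 2) (Fin 2) ℝ)
    (hJ : J = !![ustar * g1u, ustar * g1v; vstar * g2u, vstar * g2v]) :
    J.det < 0 ∧ ∃ z₁ z₂ : ℝ, z₁ < 0 ∧ 0 < z₂ ∧
      ∀ z : ℝ, z ^ 2 - J.trace * z + J.det = 0 ↔ (z = z₁ ∨ z = z₂) := by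
  have hkv : (0:ℝ) < 1 + k * vstar := by positivity
  -- compute g1v
  have hDv : HasDerivAt (fun w : ℝ =>
      a / (1 + k * w) - b * ustar - c * ustar ^ (p - 1) * w ^ m)
      (-(a * k) / (1 + k * vstar) ^ 2
        - c * ustar ^ (p - 1) * (m * vstar ^ (m - 1))) vstar := by
    have h1 : HasDerivAt (fun w : ℝ => 1 + k * w) k vstar := by
      simpa using (hasDerivAt_id vstar).const_mul k |>.const_add 1
    have h2 : HasDerivAt (fun w : ℝ => a / (1 + k * w))
        (-(a * k) / (1 + k * vstar) ^ 2) vstar := by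
      have := (hasDerivAt_const vstar a).div h1 hkv.ne'
      simpa [Pi.div_def] using this
    have h3 : HasDerivAt (fun w : ℝ => w ^ m) (m * vstar ^ (m - 1)) vstar :=
      Real.hasDerivAt_rpow_const (Or.inl hv.ne')
    exact (h2.sub_const (b * ustar)).sub (h3.const_mul (c * ustar ^ (p - 1)))
  have hg1v' : g1v = -(a * k) / (1 + k * vstar) ^ 2
      - c * ustar ^ (p - 1) * (m * vstar ^ (m - 1)) := by
    rw [hg1v, hDv.deriv]
  have hg1vneg : g1v < 0 := by
    rw [hg1v']
    have h1 : -(a * k) / (1 + k * vstar) ^ 2 ≤ 0 := by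
      apply div_nonpos_of_nonpos_of_nonneg <;> nlinarith
    have h2 : 0 < c * ustar ^ (p - 1) * (m * vstar ^ (m - 1)) := by
      have := Real.rpow_pos_of_pos hu (p - 1)
      have := Real.rpow_pos_of_pos hv (m - 1)
      positivity
    linarith
  -- compute g2v
  have hDv2 : HasDerivAt (fun w : ℝ => -d + e * ustar ^ p * w ^ (m - 1))
      (e * ustar ^ p * ((m - 1) * vstar ^ (m - 1 - 1))) vstar := by
    have h3 : HasDerivAt (fun w : ℝ => w ^ (m - 1))
        ((m - 1) * vstar ^ (m - 1 - 1)) vstar :=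
      Real.hasDerivAt_rpow_const (Or.inl hv.ne')
    simpa using (h3.const_mul (e * ustar ^ p)).const_add (-d)
  have hg2v' : g2v = e * ustar ^ p * ((m - 1) * vstar ^ (m - 1 - 1)) := by
    rw [hg2v, hDv2.deriv]
  have hg2vneg : g2v < 0 := by
    rw [hg2v']
    have h1 : 0 < ustar ^ p := Real.rpow_pos_of_pos hu p
    have h2 : 0 < vstar ^ (m - 1 - 1) := Real.rpow_pos_of_pos hv _
    have h3 := mul_pos (mul_pos he h1) h2
    nlinarith
  -- det J < 0
  have hcross : g1u * g2v - g1v * g2u < 0 := by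
    have hslope' : g2u / -g2v < g1u / -g1v := by
      rw [div_neg, div_neg, ← neg_div, ← neg_div] at *
      exact hslope
    rw [div_lt_div_iff₀ (by linarith) (by linarith)] at hslope'
    nlinarith
  have hdet : J.det = ustar * vstar * (g1u * g2v - g1v * g2u) := by
    rw [hJ, Matrix.det_fin_two_of]; ring
  have hdetneg : J.det < 0 := by
    rw [hdet]
    exact mul_neg_of_pos_of_neg (by positivity) hcross
  exact ⟨hdetneg, quad_roots_of_neg _ _ hdetneg⟩
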